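/- arXiv:2505.07277 — 2 statements merged into one kernel-verified Lean document; each statement's English description precedes it below -/
import Mathlib

section
/- Let f ∈ M take only finitely many values (the range of f is a finite set) and let t ∈ ℝ be such that D(f, n ↦ n^{it}) < ∞. Then t = 0. -/
open scoped BigOperators Classical

noncomputable section

/-- `f : ℕ → ℂ` is multiplicative: `f 1 = 1` and `f (a*b) = f a * f b` for coprime `a, b`. -/
def IsMult (f : ℕ → ℂ) : Prop :=
  f 1 = 1 ∧ ∀ a b : ℕ, Nat.Coprime a b → f (a * b) = f a * f b

/-- `Per_m(f)`: the set of positions `n ≥ 1` such that `f` is constant on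
`{n' ≥ 1 : n' ≡ n (mod m)}`. -/
def PerSet (f : ℕ → ℂ) (m : ℕ) : Set ℕ :=
  {n : ℕ | 1 ≤ n ∧ ∀ n' : ℕ, 1 ≤ n' → n' % m = n % m → f n' = f n}

/-- `f` is Toeplitz: every position `n ≥ 1` has a period. -/
def IsToeplitz (f : ℕ → ℂ) : Prop :=
  ∀ n : ℕ, 1 ≤ n → ∃ m : ℕ, 1 ≤ m ∧ n ∈ PerSet f m

/-- `χ : ℕ → ℂ` is (the function on `ℕ` induced by) a Dirichlet character of modulus `m`. -/
def IsDirichletCharFn (m : ℕ) (χ : ℕ → ℂ) : Prop :=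
  ∃ χ₀ : DirichletCharacter ℂ m, ∀ n : ℕ, χ n = χ₀ (n : ZMod m)

/-- `χ : ℕ → ℂ` is induced by a primitive Dirichlet character of modulus `m`. -/
def IsPrimitiveDirichletCharFn (m : ℕ) (χ : ℕ → ℂ) : Prop :=
  ∃ χ₀ : DirichletCharacter ℂ m, χ₀.IsPrimitive ∧ ∀ n : ℕ, χ n = χ₀ (n : ZMod m)

/-- `𝔻(f,g) < ∞`: convergence of the Granville–Soundararajan distance series. -/
def PretConv (f g : ℕ → ℂ) : Prop :=
  Summable (fun p : Nat.Primes =>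
    (1 : ℝ) / ((p : ℕ) : ℝ) * (1 - (f (p : ℕ) * (starRingEnd ℂ) (g (p : ℕ))).re))

/-- `f` is Besicovitch rationally almost periodic. -/
def IsRAP (f : ℕ → ℂ) : Prop :=
  ∀ ε : ℝ, 0 < ε → ∃ (g : ℕ → ℂ) (m : ℕ), 1 ≤ m ∧ (∀ n : ℕ, g (n + m) = g n) ∧
    Filter.limsup
      (fun N : ℕ => (1 : ℝ) / N * ∑ n ∈ Finset.Icc 1 N, ‖f n - g n‖)
      Filter.atTop < ε

section Aux
open Complex

open Complex in
lemma abs_sin_nat_mul_le (n : ℕ) (x : ℝ) : |Real.sin (n * x)| ≤ n * |Real.sin x| := by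
  induction n with
  | zero => simp
  | succ n ih =>
    have : ((n:ℝ)+1) * x = n*x + x := by ring
    rw [Nat.cast_succ, this, Real.sin_add]
    calc |Real.sin (n*x) * Real.cos x + Real.cos (n*x) * Real.sin x|
        ≤ |Real.sin (n*x) * Real.cos x| + |Real.cos (n*x) * Real.sin x| := abs_add_le _ _
      _ ≤ |Real.sin (n*x)| + |Real.sin x| := by
          rw [abs_mul, abs_mul]
          gcongr
          · calc |Real.sin (n*x)| * |Real.cos x| ≤ |Real.sin (n*x)| * 1 := by
                  gcongr; exact Real.abs_cos_le_one x
              _ = |Real.sin (n*x)| := mul_one _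
          · calc |Real.cos (n*x)| * |Real.sin x| ≤ 1 * |Real.sin x| := by
                  gcongr; exact Real.abs_cos_le_one _
              _ = |Real.sin x| := one_mul _
      _ ≤ n * |Real.sin x| + |Real.sin x| := by gcongr
      _ = ((n:ℝ)+1) * |Real.sin x| := by ring

lemma one_sub_cos_nat_mul (n : ℕ) (x : ℝ) :
    1 - Real.cos (n * x) ≤ (n:ℝ)^2 * (1 - Real.cos x) := by
  have h1 : ∀ y : ℝ, 1 - Real.cos y = 2 * Real.sin (y/2)^2 := by
    intro y
    have h2 := Real.cos_two_mul (y/2)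
    rw [show 2*(y/2) = y by ring] at h2
    have h3 := Real.sin_sq_add_cos_sq (y/2)
    nlinarith
  rw [h1, h1]
  have : (n:ℝ) * x / 2 = n * (x/2) := by ring
  rw [this]
  have h2 := abs_sin_nat_mul_le n (x/2)
  have h3 : Real.sin ((n:ℝ)*(x/2))^2 ≤ ((n:ℝ) * |Real.sin (x/2)|)^2 := by
    rw [← _root_.sq_abs]
    apply pow_le_pow_left₀ (abs_nonneg _) h2 2
  have h4 : ((n:ℝ) * |Real.sin (x/2)|)^2 = (n:ℝ)^2 * Real.sin (x/2)^2 := by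
    rw [mul_pow, _root_.sq_abs]
  nlinarith [h3]

open Complex in
lemma one_sub_re_pow_le (u : ℂ) (hu : ‖u‖ = 1) (n : ℕ) :
    1 - (u ^ n).re ≤ (n:ℝ)^2 * (1 - u.re) := by
  obtain ⟨θ, rfl⟩ := (Complex.norm_eq_one_iff u).mp hu
  have h1 : (exp (θ * I)) ^ n = exp ((n * θ : ℝ) * I) := by
    rw [← Complex.exp_nat_mul]
    push_cast
    ring_nf
  rw [h1, Complex.exp_ofReal_mul_I_re]
  have h2 : (exp ((θ:ℂ) * I)).re = Real.cos θ := Complex.exp_ofReal_mul_I_re θ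
  rw [h2]
  exact one_sub_cos_nat_mul n θ


open Complex

lemma prime_cast_pos (p : Nat.Primes) : (0:ℝ) < ((p:ℕ):ℝ) := by
  exact_mod_cast (p.prop.pos)

lemma prime_one_le (p : Nat.Primes) : (1:ℝ) ≤ ((p:ℕ):ℝ) := by
  exact_mod_cast p.prop.one_lt.le

lemma prime_two_le (p : Nat.Primes) : (2:ℝ) ≤ ((p:ℕ):ℝ) := by
  exact_mod_cast p.prop.two_le

lemma norm_p_cpow (σ t : ℝ) (p : Nat.Primes) :
    ‖(((p:ℕ):ℂ)) ^ (-((σ:ℂ) + t*I))‖ = ((p:ℕ):ℝ) ^ (-σ) := by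
  rw [show (((p:ℕ):ℂ)) = ((((p:ℕ):ℝ)):ℂ) by push_cast; ring,
    norm_cpow_eq_rpow_re_of_pos (prime_cast_pos p)]
  congr 1
  simp

lemma re_p_cpow (σ t : ℝ) (p : Nat.Primes) :
    ((((p:ℕ):ℂ)) ^ (-((σ:ℂ) + t*I))).re
      = ((p:ℕ):ℝ) ^ (-σ) * Real.cos (t * Real.log (p:ℕ)) := by
  have hne : (((p:ℕ):ℂ)) ≠ 0 := by
    exact_mod_cast p.prop.pos.ne'
  rw [cpow_def_of_ne_zero hne, ← natCast_log]
  have : ((Real.log (p:ℕ) : ℝ):ℂ) * (-((σ:ℂ) + t*I))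
      = ((-(σ * Real.log (p:ℕ)) : ℝ):ℂ) + ((-(t * Real.log (p:ℕ)) : ℝ):ℂ) * I := by
    push_cast; ring
  rw [this]
  rw [show ((-(σ * Real.log (p:ℕ)) : ℝ):ℂ) + ((-(t * Real.log (p:ℕ)) : ℝ):ℂ) * I
      = Complex.mk (-(σ * Real.log (p:ℕ))) (-(t * Real.log (p:ℕ))) by
    rw [Complex.mk_eq_add_mul_I]]
  rw [Complex.exp_re]
  simp only []
  rw [Real.cos_neg]
  congr 1
  rw [Real.rpow_def_of_pos (prime_cast_pos p)]
  ring_nf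

open Complex


lemma summable_primes_rpow {σ : ℝ} (hσ : 1 < σ) :
    Summable (fun p : Nat.Primes => ((p:ℕ):ℝ) ^ (-σ)) :=
  (Real.summable_nat_rpow.mpr (by linarith)).subtype _

lemma rpow_le_one_div (σ : ℝ) (hσ : 1 ≤ σ) (p : Nat.Primes) :
    ((p:ℕ):ℝ) ^ (-σ) ≤ 1 / ((p:ℕ):ℝ) := by
  have h1 : ((p:ℕ):ℝ) ^ (-σ) ≤ ((p:ℕ):ℝ) ^ (-1:ℝ) :=
    Real.rpow_le_rpow_of_exponent_le (prime_one_le p) (by linarith)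
  rwa [Real.rpow_neg_one, ← one_div] at h1

lemma not_summable_one_sub_cos (t : ℝ) (ht : t ≠ 0) :
    ¬ Summable (fun p : Nat.Primes => (1:ℝ)/((p:ℕ):ℝ) * (1 - Real.cos (t * Real.log (p:ℕ)))) := by
  intro hS
  set C := ∑' p : Nat.Primes, (1:ℝ)/((p:ℕ):ℝ) * (1 - Real.cos (t * Real.log (p:ℕ))) with hC
  have hsrc_nonneg : ∀ p : Nat.Primes,
      0 ≤ (1:ℝ)/((p:ℕ):ℝ) * (1 - Real.cos (t * Real.log (p:ℕ))) := by
    intro p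
    have h1 : Real.cos (t * Real.log (p:ℕ)) ≤ 1 := Real.cos_le_one _
    have h2 : (0:ℝ) ≤ 1/((p:ℕ):ℝ) := by positivity
    nlinarith
  -- bound for zeta on the segment
  obtain ⟨B, hB⟩ : ∃ B : ℝ, ∀ σ : ℝ, σ ∈ Set.Icc (1:ℝ) 2 →
      ‖riemannZeta ((σ:ℂ) + t*I)‖ ≤ B := by
    have hcont : ContinuousOn (fun σ : ℝ => riemannZeta ((σ:ℂ) + t*I)) (Set.Icc 1 2) := by
      intro σ _
      have h1 : ((σ:ℂ) + t*I) ≠ 1 := by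
        intro h
        have h2 : ((σ:ℂ) + t*I).im = (1:ℂ).im := by rw [h]
        simp at h2
        exact ht h2
      have hc2 : Continuous (fun σ : ℝ => (σ:ℂ) + t*I) := by fun_prop
      have hcomp : ContinuousAt (riemannZeta ∘ (fun σ : ℝ => (σ:ℂ) + t*I)) σ :=
        ContinuousAt.comp (differentiableAt_riemannZeta h1).continuousAt hc2.continuousAt
      exact hcomp.continuousWithinAt
    obtain ⟨B, hB⟩ := isCompact_Icc.exists_bound_of_continuousOn hcont
    exact ⟨B, fun σ hσ => hB σ hσ⟩
  set K := ∑' p : Nat.Primes, ((p:ℕ):ℝ) ^ (-(2:ℝ)) with hK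
  have hKsum : Summable (fun p : Nat.Primes => ((p:ℕ):ℝ) ^ (-(2:ℝ))) :=
    summable_primes_rpow one_lt_two
  set L := C + (Real.log (max B 1) + K) with hL
  -- the main estimate
  have main : ∀ σ : ℝ, 1 < σ → σ ≤ 2 →
      ∑' p : Nat.Primes, ((p:ℕ):ℝ) ^ (-σ) ≤ L := by
    intro σ hσ1 hσ2
    set s : ℂ := (σ:ℂ) + t*I with hs
    have hs_re : 1 < s.re := by simp [hs, hσ1]
    set f := riemannZetaSummandHom (ne_zero_of_one_lt_re hs_re) with hf
    have hfp : ∀ p : Nat.Primes, f (p:ℕ) = (((p:ℕ):ℂ)) ^ (-s) := fun p => rfl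
    have hnorm : ∀ p : Nat.Primes, ‖f (p:ℕ)‖ = ((p:ℕ):ℝ) ^ (-σ) := by
      intro p; rw [hfp, hs]; exact norm_p_cpow σ t p
    have hsum1 : Summable (fun p : Nat.Primes => ((p:ℕ):ℝ) ^ (-σ)) :=
      summable_primes_rpow hσ1
    have hsumf : Summable (fun p : Nat.Primes => f (p:ℕ)) := by
      apply Summable.of_norm
      exact hsum1.congr (fun p => (hnorm p).symm)
    have hhalf : ∀ p : Nat.Primes, ‖f (p:ℕ)‖ ≤ 1/2 := by
      intro p
      rw [hnorm]
      calc ((p:ℕ):ℝ) ^ (-σ) ≤ 1/((p:ℕ):ℝ) := rpow_le_one_div σ hσ1.le p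
        _ ≤ 1/2 := by
            have := prime_two_le p
            rw [div_le_div_iff₀ (prime_cast_pos p) two_pos]
            linarith
    -- error terms
    set err : Nat.Primes → ℂ := fun p => -Complex.log (1 - f (p:ℕ)) - f (p:ℕ) with herr
    have herrb : ∀ p : Nat.Primes, ‖err p‖ ≤ ((p:ℕ):ℝ) ^ (-(2:ℝ)) := by
      intro p
      have hlt : ‖f (p:ℕ)‖ < 1 := lt_of_le_of_lt (hhalf p) (by norm_num)
      have harg : (1 - f (p:ℕ)).arg ≠ Real.pi := by
        apply slitPlane_arg_ne_pi
        have := mem_slitPlane_of_norm_lt_one (z := -(f (p:ℕ))) (by rwa [norm_neg])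
        simpa [sub_eq_add_neg] using this
      have h1 : err p = Complex.log (1 - f (p:ℕ))⁻¹ - f (p:ℕ) := by
        rw [herr, Complex.log_inv _ harg]
      rw [h1]
      calc ‖Complex.log (1 - f (p:ℕ))⁻¹ - f (p:ℕ)‖
          ≤ ‖f (p:ℕ)‖^2 * (1 - ‖f (p:ℕ)‖)⁻¹ / 2 := norm_log_one_sub_inv_sub_self_le hlt
        _ ≤ ‖f (p:ℕ)‖^2 := by
            have h2 : (1 - ‖f (p:ℕ)‖)⁻¹ ≤ 2 := by
              rw [inv_le_comm₀ (by nlinarith [hhalf p]) two_pos]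
              nlinarith [hhalf p]
            have h3 : (0:ℝ) ≤ ‖f (p:ℕ)‖^2 := sq_nonneg _
            nlinarith
        _ ≤ ((p:ℕ):ℝ) ^ (-(2:ℝ)) := by
            rw [hnorm]
            have h4 : (((p:ℕ):ℝ) ^ (-σ))^2 = ((p:ℕ):ℝ) ^ (-σ + -σ) := by
              rw [sq, ← Real.rpow_add (prime_cast_pos p)]
            rw [h4]
            exact Real.rpow_le_rpow_of_exponent_le (prime_one_le p) (by linarith)
    have herrsum : Summable err :=
      Summable.of_norm_bounded hKsum herrb
    have hnormsum : Summable (fun p : Nat.Primes => ‖err p‖) :=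
      hKsum.of_nonneg_of_le (fun p => norm_nonneg _) herrb
    have hEuler : Complex.exp (∑' p : Nat.Primes, -Complex.log (1 - f (p:ℕ))) = riemannZeta s :=
      (EulerProduct.exp_tsum_primes_log_eq_tsum (f := f)
        (summable_riemannZetaSummand hs_re)).trans (tsum_riemannZetaSummand hs_re)
    have hsplit : (∑' p : Nat.Primes, -Complex.log (1 - f (p:ℕ)))
        = (∑' p : Nat.Primes, f (p:ℕ)) + ∑' p : Nat.Primes, err p := by
      have h0 : (fun p : Nat.Primes => -Complex.log (1 - f (p:ℕ)))
          = fun p : Nat.Primes => f (p:ℕ) + err p := by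
        funext p; rw [herr]; ring
      rw [h0, Summable.tsum_add hsumf herrsum]
    have habs : Real.exp ((∑' p : Nat.Primes, f (p:ℕ)).re)
        * Real.exp ((∑' p : Nat.Primes, err p).re) = ‖riemannZeta s‖ := by
      rw [← Complex.norm_exp, ← Complex.norm_exp, ← norm_mul, ← Complex.exp_add,
        ← hsplit, hEuler]
    have hBs : ‖riemannZeta s‖ ≤ max B 1 :=
      le_trans (hB σ ⟨hσ1.le, hσ2⟩) (le_max_left B 1)
    have h6 : ‖∑' p : Nat.Primes, err p‖ ≤ K :=
      le_trans (norm_tsum_le_tsum_norm hnormsum) (Summable.tsum_le_tsum herrb hnormsum hKsum)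
    have h7 : -K ≤ (∑' p : Nat.Primes, err p).re := by
      have := Complex.abs_re_le_norm (∑' p : Nat.Primes, err p)
      have h8 := abs_le.mp (le_trans this h6)
      linarith [h8.1]
    have hre : (∑' p : Nat.Primes, f (p:ℕ)).re
        = ∑' p : Nat.Primes, ((p:ℕ):ℝ)^(-σ) * Real.cos (t * Real.log (p:ℕ)) := by
      rw [Complex.re_tsum hsumf]
      exact tsum_congr fun p => by rw [hfp]; exact re_p_cpow σ t p
    set S2 := ∑' p : Nat.Primes, ((p:ℕ):ℝ)^(-σ) * Real.cos (t * Real.log (p:ℕ)) with hS2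
    have hexp : Real.exp S2 ≤ max B 1 * Real.exp K := by
      have h9 : Real.exp S2 * Real.exp (-K) ≤ max B 1 := by
        calc Real.exp S2 * Real.exp (-K)
            ≤ Real.exp S2 * Real.exp ((∑' p : Nat.Primes, err p).re) := by
              have := Real.exp_le_exp.mpr h7
              have h10 := Real.exp_pos S2
              nlinarith
          _ = ‖riemannZeta s‖ := by rw [← hre, habs]
          _ ≤ max B 1 := hBs
      rw [Real.exp_neg, ← div_eq_mul_inv, div_le_iff₀ (Real.exp_pos K)] at h9
      exact h9
    have hS2le : S2 ≤ Real.log (max B 1) + K := by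
      have hpos : (0:ℝ) < max B 1 * Real.exp K := by positivity
      have := Real.log_le_log (Real.exp_pos S2) hexp
      rwa [Real.log_exp, Real.log_mul (by positivity) (Real.exp_pos K).ne',
        Real.log_exp] at this
    have hsum2 : Summable (fun p : Nat.Primes =>
        ((p:ℕ):ℝ)^(-σ) * Real.cos (t * Real.log (p:ℕ))) := by
      apply Summable.of_norm_bounded hsum1
      intro p
      rw [Real.norm_eq_abs, abs_mul, _root_.abs_of_nonneg (Real.rpow_nonneg (prime_cast_pos p).le (-σ))]
      exact mul_le_of_le_one_right (Real.rpow_nonneg (prime_cast_pos p).le _)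
        (Real.abs_cos_le_one _)
    have hdiff : (∑' p : Nat.Primes, (((p:ℕ):ℝ)^(-σ)
        - ((p:ℕ):ℝ)^(-σ) * Real.cos (t * Real.log (p:ℕ)))) ≤ C := by
      apply Summable.tsum_le_tsum _ (hsum1.sub hsum2) hS
      intro p
      have h13 := rpow_le_one_div σ hσ1.le p
      have h14 := Real.cos_le_one (t * Real.log (p:ℕ))
      have h15 : (0:ℝ) ≤ ((p:ℕ):ℝ)^(-σ) := Real.rpow_nonneg (prime_cast_pos p).le _
      nlinarith
    rw [Summable.tsum_sub hsum1 hsum2] at hdiff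
    rw [hL]
    linarith
  -- find sigma contradicting the estimate
  obtain ⟨F, hF⟩ : ∃ F : Finset Nat.Primes, L + 1 < ∑ p ∈ F, (1:ℝ)/((p:ℕ):ℝ) := by
    by_contra h
    push_neg at h
    exact Nat.Primes.not_summable_one_div
      (summable_of_sum_le (fun p => by positivity) (fun F => by
        have := h F
        calc ∑ p ∈ F, (1:ℝ)/((p:ℕ):ℝ) ≤ L + 1 := this))
  have hg : Filter.Tendsto (fun σ : ℝ => ∑ p ∈ F, ((p:ℕ):ℝ)^(-σ)) (nhds 1)
      (nhds (∑ p ∈ F, ((p:ℕ):ℝ)^(-(1:ℝ)))) := by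
    apply tendsto_finset_sum
    intro p _
    have hc : ContinuousAt (fun σ : ℝ => ((p:ℕ):ℝ) ^ σ) (-1:ℝ) :=
      Real.continuousAt_const_rpow (prime_cast_pos p).ne'
    have hneg : ContinuousAt (fun σ : ℝ => -σ) (1:ℝ) := (continuous_neg).continuousAt
    have := hc.comp (show ContinuousAt (fun σ : ℝ => -σ) 1 from hneg)
    exact this
  have hgval : ∑ p ∈ F, ((p:ℕ):ℝ)^(-(1:ℝ)) = ∑ p ∈ F, (1:ℝ)/((p:ℕ):ℝ) := by
    apply Finset.sum_congr rfl
    intro p _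
    rw [Real.rpow_neg_one, one_div]
  have hev : ∀ᶠ σ : ℝ in nhds 1, L < ∑ p ∈ F, ((p:ℕ):ℝ)^(-σ) := by
    apply hg.eventually
    apply eventually_gt_nhds
    rw [hgval]; linarith
  have hev2 : ∀ᶠ σ : ℝ in nhdsWithin 1 (Set.Ioi 1),
      L < ∑ p ∈ F, ((p:ℕ):ℝ)^(-σ) ∧ σ ∈ Set.Ioc (1:ℝ) 2 :=
    (hev.filter_mono nhdsWithin_le_nhds).and
      (Filter.eventually_of_mem (Ioc_mem_nhdsGT_of_mem ⟨le_refl 1, one_lt_two⟩) fun x hx => hx)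
  obtain ⟨σ, hσa, hσb⟩ := hev2.exists
  have h20 : ∑ p ∈ F, ((p:ℕ):ℝ)^(-σ) ≤ ∑' p : Nat.Primes, ((p:ℕ):ℝ)^(-σ) :=
    Summable.sum_le_tsum F (fun p _ => Real.rpow_nonneg (prime_cast_pos p).le _)
      (summable_primes_rpow hσb.1)
  have h21 := main σ hσb.1 hσb.2
  linarith

open Complex


lemma isMult_prod (f : ℕ → ℂ) (hf : IsMult f) :
    ∀ T : Finset ℕ, (∀ p ∈ T, Nat.Prime p) → f (∏ p ∈ T, p) = ∏ p ∈ T, f p := by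
  intro T
  induction T using Finset.induction_on with
  | empty => intro _; simpa using hf.1
  | @insert a s ha ih =>
    intro hT
    have hA : Nat.Prime a := hT a (Finset.mem_insert_self a s)
    have hcop : Nat.Coprime a (∏ p ∈ s, p) := by
      apply Nat.Coprime.prod_right
      intro q hq
      exact (Nat.coprime_primes hA (hT q (Finset.mem_insert_of_mem hq))).mpr
        (fun h => ha (h ▸ hq))
    rw [Finset.prod_insert ha, Finset.prod_insert ha, hf.2 a _ hcop,
      ih (fun p hp => hT p (Finset.mem_insert_of_mem hp))]

lemma pow_mem_range (f : ℕ → ℂ) (hf : IsMult f) {v : ℂ}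
    (hinf : {q : ℕ | q.Prime ∧ f q = v}.Infinite) (k : ℕ) :
    v ^ k ∈ Set.range f := by
  obtain ⟨T, hTsub, hTcard⟩ := hinf.exists_subset_card_eq k
  refine ⟨∏ p ∈ T, p, ?_⟩
  rw [isMult_prod f hf T (fun p hp => (hTsub hp).1),
    Finset.prod_congr rfl (fun p hp => (hTsub hp).2), Finset.prod_const, hTcard]

lemma root_of_infinite (f : ℕ → ℂ) (hf : IsMult f) (hfin : (Set.range f).Finite) {v : ℂ}
    (hinf : {q : ℕ | q.Prime ∧ f q = v}.Infinite) (hv : v ≠ 0) :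
    v ^ (Nat.factorial hfin.toFinset.card) = 1 := by
  set R := hfin.toFinset.card with hR
  have hmaps : ∀ i : Fin (R+1), i ∈ (Finset.univ : Finset (Fin (R+1))) →
      v ^ ((i:ℕ)+1) ∈ hfin.toFinset := fun i _ =>
    hfin.mem_toFinset.mpr (pow_mem_range f hf hinf _)
  have hcard : hfin.toFinset.card < (Finset.univ : Finset (Fin (R+1))).card := by
    simp [← hR]
  obtain ⟨i, _, j, _, hij, heq⟩ :=
    Finset.exists_ne_map_eq_of_card_lt_of_maps_to hcard hmaps
  -- wlog i < j
  have key : ∀ i j : Fin (R+1), (i:ℕ) < (j:ℕ) → v ^ ((i:ℕ)+1) = v ^ ((j:ℕ)+1) →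
      v ^ Nat.factorial R = 1 := by
    intro i j hlt he
    set d := (j:ℕ) - (i:ℕ) with hd
    have hd1 : 1 ≤ d := by omega
    have hdR : d ≤ R := by have := j.isLt; omega
    have hde : ((j:ℕ)+1) = ((i:ℕ)+1) + d := by omega
    have hvd : v ^ d = 1 := by
      have he2 : v ^ ((i:ℕ)+1) * v ^ d = v ^ ((i:ℕ)+1) * 1 := by
        rw [mul_one, ← pow_add, ← hde]; exact he.symm
      exact mul_left_cancel₀ (pow_ne_zero _ hv) he2
    obtain ⟨m, hm⟩ : d ∣ Nat.factorial R := Nat.dvd_factorial (by omega) hdR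
    rw [hm, pow_mul, hvd, one_pow]
  rcases lt_trichotomy (i:ℕ) (j:ℕ) with h | h | h
  · exact key i j h heq
  · exact absurd (Fin.ext h) hij
  · exact key j i h heq.symm

lemma exceptional_finite (f : ℕ → ℂ) (hfin : (Set.range f).Finite) :
    {p : ℕ | p.Prime ∧ {q : ℕ | q.Prime ∧ f q = f p}.Finite}.Finite := by
  have hsub : {p : ℕ | p.Prime ∧ {q : ℕ | q.Prime ∧ f q = f p}.Finite}
      ⊆ ⋃ v ∈ Set.range f,
        {q : ℕ | q.Prime ∧ f q = v ∧ {q' : ℕ | q'.Prime ∧ f q' = v}.Finite} := by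
    intro p hp
    exact Set.mem_biUnion ⟨p, rfl⟩ ⟨hp.1, rfl, hp.2⟩
  refine Set.Finite.subset (Set.Finite.biUnion hfin ?_) hsub
  intro v _
  by_cases hv : {q' : ℕ | q'.Prime ∧ f q' = v}.Finite
  · exact hv.subset (fun q hq => ⟨hq.1, hq.2.1⟩)
  · have : {q : ℕ | q.Prime ∧ f q = v ∧ {q' : ℕ | q'.Prime ∧ f q' = v}.Finite} = ∅ := by
      ext q; simp only [Set.mem_setOf_eq, Set.mem_empty_iff_false, iff_false]
      tauto
    rw [this]; exact Set.finite_empty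

open Complex



-- the cpow as exp lemma
lemma cpow_tI_eq (t : ℝ) (p : Nat.Primes) :
    (((p:ℕ):ℂ)) ^ ((t:ℂ) * I) = Complex.exp (((t * Real.log (p:ℕ) : ℝ):ℂ) * I) := by
  have hne : (((p:ℕ):ℂ)) ≠ 0 := by exact_mod_cast p.prop.pos.ne'
  rw [cpow_def_of_ne_zero hne, ← natCast_log]
  congr 1
  push_cast
  ring


end Aux

open Complex in
theorem finite_range_pretends_archimedean_t_eq_zero
    (f : ℕ → ℂ) (hf : IsMult f) (hb : ∀ n : ℕ, ‖f n‖ ≤ 1)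
    (hfin : (Set.range f).Finite) (t : ℝ)
    (hpret : PretConv f (fun n : ℕ => (n : ℂ) ^ ((t : ℂ) * Complex.I))) :
    t = 0 := by
  classical
  set N := Nat.factorial hfin.toFinset.card with hN
  have hN0 : N ≠ 0 := Nat.factorial_ne_zero _
  set src : Nat.Primes → ℝ := fun p =>
    (1:ℝ)/((p:ℕ):ℝ) * (1 - (f (p:ℕ) * (starRingEnd ℂ)
      ((((p:ℕ):ℂ)) ^ ((t:ℂ) * I))).re) with hsrc
  have hsrcsum : Summable src := hpret
  -- basic facts
  have habsw : ∀ p : Nat.Primes, ‖(((p:ℕ):ℂ)) ^ ((t:ℂ) * I)‖ = 1 := by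
    intro p
    rw [show (((p:ℕ):ℂ)) = ((((p:ℕ):ℝ)):ℂ) by push_cast; ring,
      norm_cpow_eq_rpow_re_of_pos (by exact_mod_cast p.prop.pos)]
    simp
  have hsrc_nonneg : ∀ p : Nat.Primes, 0 ≤ src p := by
    intro p
    rw [hsrc]
    have h1 : (f (p:ℕ) * (starRingEnd ℂ) ((((p:ℕ):ℂ)) ^ ((t:ℂ) * I))).re ≤ 1 := by
      calc (f (p:ℕ) * (starRingEnd ℂ) ((((p:ℕ):ℂ)) ^ ((t:ℂ) * I))).re
          ≤ ‖f (p:ℕ) * (starRingEnd ℂ) ((((p:ℕ):ℂ)) ^ ((t:ℂ) * I))‖ :=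
            Complex.re_le_norm _
        _ = ‖f (p:ℕ)‖ * ‖(((p:ℕ):ℂ)) ^ ((t:ℂ) * I)‖ := by
            rw [norm_mul, Complex.norm_conj]
        _ ≤ 1 := by rw [habsw p]; simpa using hb (p:ℕ)
    have h2 : (0:ℝ) ≤ 1/((p:ℕ):ℝ) := by positivity
    nlinarith
  -- exceptional set
  set E : Set ℕ := {p : ℕ | p.Prime ∧ {q : ℕ | q.Prime ∧ f q = f p}.Finite} with hE
  have hEfin : E.Finite := exceptional_finite f hfin
  have hE' : {p : Nat.Primes | (p:ℕ) ∈ E}.Finite := by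
    apply Set.Finite.preimage _ hEfin
    exact Subtype.coe_injective.injOn
  -- comparison
  have hkey : ∀ p : Nat.Primes, (p:ℕ) ∉ E →
      (1:ℝ)/((p:ℕ):ℝ) * (1 - Real.cos (((N:ℝ)*t) * Real.log (p:ℕ)))
        ≤ ((N:ℝ)^2 + 2) * src p := by
    intro p hpE
    have hinf : {q : ℕ | q.Prime ∧ f q = f (p:ℕ)}.Infinite := by
      rw [hE] at hpE
      simp only [Set.mem_setOf_eq, not_and] at hpE
      exact hpE p.prop
    have hp2 : (0:ℝ) ≤ 1/((p:ℕ):ℝ) := by positivity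
    by_cases hv : f (p:ℕ) = 0
    · -- src p = 1/p
      have hsrcp : src p = 1/((p:ℕ):ℝ) := by
        rw [hsrc]; simp [hv]
      have hcos : Real.cos (((N:ℝ)*t) * Real.log (p:ℕ)) ≥ -1 := Real.neg_one_le_cos _
      rw [hsrcp]
      nlinarith [sq_nonneg ((N:ℝ))]
    · have hroot : f (p:ℕ) ^ N = 1 := root_of_infinite f hf hfin hinf hv
      have habsv : ‖f (p:ℕ)‖ = 1 := by
        have h1 : ‖f (p:ℕ)‖ ^ N = 1 := by
          rw [← norm_pow, hroot, norm_one]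
        by_contra h
        have h2 : ‖f (p:ℕ)‖ < 1 := lt_of_le_of_ne (hb _) h
        have h3 : ‖f (p:ℕ)‖ ^ N < 1 :=
          pow_lt_one₀ (norm_nonneg _) h2 hN0
        rw [h1] at h3; exact lt_irrefl 1 h3
      set u : ℂ := f (p:ℕ) * (starRingEnd ℂ) ((((p:ℕ):ℂ)) ^ ((t:ℂ) * I)) with hu
      have habsu : ‖u‖ = 1 := by
        rw [hu, norm_mul, Complex.norm_conj, habsv, habsw p, one_mul]
      have hupow : (u ^ N).re = Real.cos (((N:ℝ)*t) * Real.log (p:ℕ)) := by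
        rw [hu, mul_pow, hroot, one_mul, ← map_pow, cpow_tI_eq t p, ← Complex.exp_nat_mul]
        have harg : ((N:ℂ)) * (((t * Real.log (p:ℕ) : ℝ):ℂ) * I)
            = (((N:ℝ) * t * Real.log (p:ℕ) : ℝ):ℂ) * I := by push_cast; ring
        rw [harg, ← Complex.exp_conj]
        have harg2 : (starRingEnd ℂ) ((((N:ℝ) * t * Real.log (p:ℕ) : ℝ):ℂ) * I)
            = ((-((N:ℝ) * t * Real.log (p:ℕ)) : ℝ):ℂ) * I := by
          rw [map_mul, Complex.conj_I, Complex.conj_ofReal]; push_cast; ring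
        rw [harg2, Complex.exp_ofReal_mul_I_re, Real.cos_neg]
      have hineq := one_sub_re_pow_le u habsu N
      rw [hupow] at hineq
      have := mul_le_mul_of_nonneg_left hineq hp2
      calc (1:ℝ)/((p:ℕ):ℝ) * (1 - Real.cos (((N:ℝ)*t) * Real.log (p:ℕ)))
          ≤ 1/((p:ℕ):ℝ) * ((N:ℝ)^2 * (1 - u.re)) := this
        _ = (N:ℝ)^2 * src p := by rw [hsrc, hu]; ring
        _ ≤ ((N:ℝ)^2 + 2) * src p := by nlinarith [hsrc_nonneg p]
  -- summability of the target
  have htarget : Summable (fun p : Nat.Primes =>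
      (1:ℝ)/((p:ℕ):ℝ) * (1 - Real.cos (((N:ℝ)*t) * Real.log (p:ℕ)))) := by
    have hbound : Summable (fun p : Nat.Primes =>
        ((N:ℝ)^2 + 2) * src p
          + Set.indicator {p : Nat.Primes | (p:ℕ) ∈ E} (fun _ => (2:ℝ)) p) := by
      apply Summable.add (hsrcsum.mul_left _)
      apply summable_of_ne_finset_zero (s := hE'.toFinset)
      intro p hp
      apply Set.indicator_of_notMem
      rwa [← hE'.mem_toFinset]
    apply Summable.of_nonneg_of_le _ _ hbound
    · intro p
      have h1 : Real.cos (((N:ℝ)*t) * Real.log (p:ℕ)) ≤ 1 := Real.cos_le_one _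
      have h2 : (0:ℝ) ≤ 1/((p:ℕ):ℝ) := by positivity
      nlinarith
    · intro p
      by_cases hpE : (p:ℕ) ∈ E
      · have hind : Set.indicator {p : Nat.Primes | (p:ℕ) ∈ E} (fun _ => (2:ℝ)) p = 2 :=
          Set.indicator_of_mem (show p ∈ {p : Nat.Primes | (p:ℕ) ∈ E} from hpE) _
        rw [hind]
        have h1 : Real.cos (((N:ℝ)*t) * Real.log (p:ℕ)) ≥ -1 := Real.neg_one_le_cos _
        have h3 : (1:ℝ)/((p:ℕ):ℝ) ≤ 1/2 := by
          rw [div_le_div_iff₀ (prime_cast_pos p) two_pos]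
          linarith [prime_two_le p]
        have h4 : (0:ℝ) ≤ ((N:ℝ)^2 + 2) * src p := by
          have := hsrc_nonneg p
          nlinarith [sq_nonneg ((N:ℝ))]
        have h5 : (0:ℝ) ≤ 1/((p:ℕ):ℝ) := by positivity
        nlinarith
      · have hind : Set.indicator {p : Nat.Primes | (p:ℕ) ∈ E} (fun _ => (2:ℝ)) p = 0 :=
          Set.indicator_of_notMem (show p ∉ {p : Nat.Primes | (p:ℕ) ∈ E} from hpE) _
        rw [hind, add_zero]
        exact hkey p hpE
  -- conclude
  have hNt : (N:ℝ) * t = 0 := by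
    by_contra h
    exact not_summable_one_sub_cos _ h htarget
  rcases mul_eq_zero.mp hNt with h | h
  · exact absurd h (by exact_mod_cast hN0)
  · exact h
end
end

section
/- Let f ∈ M, let χ be a Dirichlet character, and let F be a set of primes with ∑_{p ∈ F} 1/p < ∞. Assume f(n) = χ(n) for every n ≥ 1 that is coprime to every prime of F. Then f is Besicovitch rationally almost periodic (RAP); in particular the mean lim_{N→∞} (1/N)·∑_{n=1}^{N} f(n) exists. -/
open scoped BigOperators Classical

noncomputable section

open Filter Finset in
lemma per_iter {g : ℕ → ℂ} {M : ℕ} (hper : ∀ n, g (n + M) = g n) :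
    ∀ k n, g (n + M * k) = g n := by
  intro k
  induction k with
  | zero => simp
  | succ k ih =>
    intro n
    have : n + M * (k + 1) = (n + M * k) + M := by ring
    rw [this, hper, ih]

lemma sum_block {g : ℕ → ℂ} {M : ℕ} (hper : ∀ n, g (n + M) = g n) :
    ∀ q, ∑ n ∈ Finset.Ioc 0 (M * q), g n = q • ∑ n ∈ Finset.Ioc 0 M, g n := by
  intro q
  induction q with
  | zero => simp
  | succ q ih =>
    have h1 : (0:ℕ) ≤ M * q := Nat.zero_le _
    have h2 : M * q ≤ M * (q + 1) := Nat.mul_le_mul_left M (Nat.le_succ q)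
    rw [← Finset.sum_Ioc_consecutive _ h1 h2, ih]
    have hre : ∑ n ∈ Finset.Ioc (M * q) (M * (q + 1)), g n
        = ∑ n ∈ Finset.Ioc 0 M, g n := by
      have he : Finset.Ioc (M * q) (M * (q + 1)) =
          (Finset.Ioc 0 M).map (addRightEmbedding (M * q)) := by
        rw [Finset.map_add_right_Ioc]
        congr 1 <;> ring
      rw [he, Finset.sum_map]
      refine Finset.sum_congr rfl fun n _ => ?_
      simpa using per_iter hper q n
    rw [hre, succ_nsmul]

lemma periodic_mean (g : ℕ → ℂ) (M : ℕ) (hM : 1 ≤ M)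
    (hper : ∀ n, g (n + M) = g n) (hg : ∀ n, ‖g n‖ ≤ 1) :
    Filter.Tendsto (fun N : ℕ => (1 : ℂ) / N * ∑ n ∈ Finset.Icc 1 N, g n)
      Filter.atTop (nhds ((1 : ℂ) / M * ∑ n ∈ Finset.Icc 1 M, g n)) := by
  have hIcc : ∀ N : ℕ, Finset.Icc 1 N = Finset.Ioc 0 N := fun N => rfl
  set S : ℂ := ∑ n ∈ Finset.Icc 1 M, g n with hS
  set L : ℂ := (1 : ℂ) / M * S with hL
  have hM0 : (M : ℝ) ≠ 0 := by positivity
  have hMC : (M : ℂ) ≠ 0 := by exact_mod_cast fun h => hM0 (by exact_mod_cast h)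
  have key : ∀ N : ℕ, 1 ≤ N →
      ‖(1 : ℂ) / N * ∑ n ∈ Finset.Icc 1 N, g n - L‖ ≤ (‖S‖ + M) * (1 / N) := by
    intro N hN
    have hN0 : (N : ℝ) ≠ 0 := by positivity
    have hNC : (N : ℂ) ≠ 0 := by exact_mod_cast fun h => hN0 (by exact_mod_cast h)
    set q : ℕ := N / M with hq
    have hqM : M * q ≤ N := Nat.mul_div_le N M
    -- split sum
    have hsplit : ∑ n ∈ Finset.Icc 1 N, g n
        = (q : ℂ) * S + ∑ n ∈ Finset.Ioc (M * q) N, g n := by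
      rw [hIcc, ← Finset.sum_Ioc_consecutive _ (Nat.zero_le (M*q)) hqM, sum_block hper q]
      rw [nsmul_eq_mul]; rfl
    -- tail bound
    have htail : ‖∑ n ∈ Finset.Ioc (M * q) N, g n‖ ≤ (M : ℝ) := by
      calc ‖∑ n ∈ Finset.Ioc (M * q) N, g n‖
          ≤ ∑ n ∈ Finset.Ioc (M * q) N, ‖g n‖ := norm_sum_le _ _
        _ ≤ ∑ _n ∈ Finset.Ioc (M * q) N, (1:ℝ) := by
            refine Finset.sum_le_sum fun n _ => ?_
            simpa using hg n
        _ = ((Finset.Ioc (M * q) N).card : ℝ) := by simp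
        _ ≤ (M : ℝ) := by
            rw [Nat.card_Ioc]
            have : N - M * q < M := by
              have h1 : M * q + N % M = N := by rw [hq]; exact Nat.div_add_mod N M
              have h2 := Nat.mod_lt N (show 0 < M from hM)
              omega
            exact_mod_cast this.le
    -- main estimate
    have hcast : ‖(q : ℂ) / N - 1 / M‖ ≤ 1 / N := by
      have hq1 : (q : ℂ) / N - 1 / M = ((q : ℂ) * M - N) / (N * M) := by
        field_simp
      rw [hq1]
      have hnum : ‖(q : ℂ) * M - (N : ℂ)‖ ≤ (M : ℝ) := by
        have h1 : ((q : ℂ) * M - N) = -((N - M * q : ℕ) : ℂ) := by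
          push_cast [Nat.cast_sub hqM]
          ring
        rw [h1, norm_neg]
        have : ((N - M * q : ℕ) : ℝ) ≤ (M : ℝ) := by
          have : N - M * q < M := by
            have h1 : M * q + N % M = N := by rw [hq]; exact Nat.div_add_mod N M
            have h2 := Nat.mod_lt N (show 0 < M from hM)
            omega
          exact_mod_cast this.le
        simpa [Complex.norm_natCast] using this
      have hnm : ‖(N : ℂ) * (M:ℂ)‖ = (N:ℝ) * M := by
        simp [norm_mul]
      rw [norm_div, hnm, div_le_iff₀ (by positivity : (0:ℝ) < (N:ℝ)*M)]
      calc ‖(q:ℂ)*M - N‖ ≤ (M:ℝ) := hnum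
        _ = 1 / N * ((N:ℝ) * M) := by field_simp
    calc ‖(1 : ℂ) / N * ∑ n ∈ Finset.Icc 1 N, g n - L‖
        = ‖((q : ℂ) / N - 1 / M) * S + (1 / N) * ∑ n ∈ Finset.Ioc (M * q) N, g n‖ := by
          rw [hsplit]; congr 1; rw [hL]; ring
      _ ≤ ‖((q : ℂ) / N - 1 / M) * S‖ + ‖(1 / N : ℂ) * ∑ n ∈ Finset.Ioc (M * q) N, g n‖ :=
          norm_add_le _ _
      _ ≤ (1 / N) * ‖S‖ + (1 / N) * M := by
          gcongr
          · rw [norm_mul]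
            exact mul_le_mul_of_nonneg_right hcast (norm_nonneg _)
          · rw [norm_mul]
            have : ‖(1 / N : ℂ)‖ = 1 / (N:ℝ) := by
              simp [Complex.norm_natCast]
            rw [this]
            exact mul_le_mul_of_nonneg_left htail (by positivity)
      _ = (‖S‖ + M) * (1 / N) := by
          ring
  -- conclude tendsto
  have h0 : Filter.Tendsto (fun N : ℕ => (‖S‖ + M) * (1 / (N:ℝ))) Filter.atTop (nhds 0) := by
    have := tendsto_one_div_atTop_nhds_zero_nat (𝕜 := ℝ)
    simpa using this.const_mul (‖S‖ + M)
  rw [show nhds ((1:ℂ)/M * S) = nhds (L) from rfl]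
  have : Filter.Tendsto (fun N : ℕ => ((1 : ℂ) / N * ∑ n ∈ Finset.Icc 1 N, g n - L)) Filter.atTop (nhds 0) := by
    apply squeeze_zero_norm' _ h0
    filter_upwards [Filter.eventually_ge_atTop 1] with N hN
    exact key N hN
  have := this.add_const L
  simpa using this

lemma prod_pow_primes_dvd (s : Finset ℕ) (hs : ∀ p ∈ s, Nat.Prime p) (e : ℕ → ℕ) (n : ℕ)
    (h : ∀ p ∈ s, p ^ e p ∣ n) : (∏ p ∈ s, p ^ e p) ∣ n := by
  classical
  induction s using Finset.induction_on with
  | empty => simpa using one_dvd n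
  | @insert a s ha ih =>
    rw [Finset.prod_insert ha]
    have hcop : Nat.Coprime (a ^ e a) (∏ p ∈ s, p ^ e p) := by
      apply Nat.Coprime.pow_left
      rw [Nat.coprime_prod_right_iff]
      intro q hq
      apply Nat.Coprime.pow_right
      have haP := hs a (Finset.mem_insert_self a s)
      have hqP := hs q (Finset.mem_insert_of_mem hq)
      exact (Nat.coprime_primes haP hqP).mpr (by rintro rfl; exact ha hq)
    exact hcop.mul_dvd_of_dvd_of_dvd (h a (Finset.mem_insert_self a s))
      (ih (fun p hp => hs p (Finset.mem_insert_of_mem hp))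
        (fun p hp => h p (Finset.mem_insert_of_mem hp)))

lemma approx_key
    (f : ℕ → ℂ) (hf : IsMult f) (hb : ∀ n : ℕ, ‖f n‖ ≤ 1)
    (m : ℕ) (hm : 1 ≤ m) (χ : ℕ → ℂ) (hχ : IsDirichletCharFn m χ)
    (F : Set ℕ) (hF : ∀ p ∈ F, Nat.Prime p)
    (hFsum : Summable (fun p : F => (1 : ℝ) / ((p : ℕ) : ℝ)))
    (hfχ : ∀ n : ℕ, 1 ≤ n → (∀ p ∈ F, ¬ p ∣ n) → f n = χ n) :
    ∀ ε : ℝ, 0 < ε → ∃ (g : ℕ → ℂ) (M : ℕ), 1 ≤ M ∧ (∀ n : ℕ, g (n + M) = g n) ∧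
      (∀ n : ℕ, ‖g n‖ ≤ 1) ∧
      ∀ N : ℕ, 1 ≤ N →
        (1 : ℝ) / N * ∑ n ∈ Finset.Icc 1 N, ‖f n - g n‖ ≤ ε := by
  intro ε hε
  obtain ⟨χ₀, hχ₀⟩ := hχ
  set ε4 : ℝ := ε / 4 with hε4
  have hε4pos : 0 < ε4 := by positivity
  -- choose the finite exceptional set S of primes
  obtain ⟨S, hS⟩ := summable_iff_vanishing_norm.mp hFsum ε4 hε4pos
  set S₀ : Finset ℕ := S.image (Subtype.val) with hS₀
  have hS₀F : ∀ p ∈ S₀, p ∈ F := by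
    intro p hp
    rw [hS₀] at hp
    obtain ⟨q, hq, rfl⟩ := Finset.mem_image.mp hp
    exact q.2
  have hS₀P : ∀ p ∈ S₀, Nat.Prime p := fun p hp => hF p (hS₀F p hp)
  have hS₀2 : ∀ p ∈ S₀, 2 ≤ p := fun p hp => (hS₀P p hp).two_le
  -- choose D
  obtain ⟨D₀, hD₀⟩ := exists_pow_lt_of_lt_one
    (show (0:ℝ) < ε4 / (S₀.card + 1) by positivity) (show (1:ℝ)/2 < 1 by norm_num)
  set D : ℕ := max 1 D₀ with hD
  have hD1 : 1 ≤ D := le_max_left _ _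
  have hhalf : ((1:ℝ)/2)^D ≤ ((1:ℝ)/2)^D₀ :=
    pow_le_pow_of_le_one (by norm_num) (by norm_num) (le_max_right _ _)
  have hDsum : ∑ p ∈ S₀, (1:ℝ)/(p:ℝ)^D ≤ ε4 := by
    have h1 : ∀ p ∈ S₀, (1:ℝ)/(p:ℝ)^D ≤ ((1:ℝ)/2)^D := by
      intro p hp
      rw [one_div_pow]
      apply one_div_le_one_div_of_le (by positivity)
      exact pow_le_pow_left₀ (by norm_num) (by exact_mod_cast hS₀2 p hp) D
    have hc : (0:ℝ) < (S₀.card : ℝ) + 1 := by positivity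
    calc ∑ p ∈ S₀, (1:ℝ)/(p:ℝ)^D ≤ S₀.card • (((1:ℝ)/2)^D) :=
          Finset.sum_le_card_nsmul _ _ _ h1
      _ = (S₀.card : ℝ) * ((1:ℝ)/2)^D := by rw [nsmul_eq_mul]
      _ ≤ (S₀.card : ℝ) * (ε4 / (S₀.card + 1)) :=
          mul_le_mul_of_nonneg_left (hhalf.trans hD₀.le) (Nat.cast_nonneg _)
      _ ≤ ((S₀.card : ℝ) + 1) * (ε4 / (S₀.card + 1)) :=
          mul_le_mul_of_nonneg_right (by linarith) (by positivity)
      _ = ε4 := mul_div_cancel₀ ε4 hc.ne'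
  -- define the approximant
  set A : ℕ → ℕ := fun n => ∏ p ∈ S₀, p ^ (n.factorization p) with hA
  set P : ℕ := ∏ p ∈ S₀, p ^ D with hP
  set M : ℕ := m * P with hM
  have hP1 : 1 ≤ P := by
    rw [hP]
    exact Nat.one_le_iff_ne_zero.mpr (Finset.prod_ne_zero_iff.mpr
      (fun p hp => pow_ne_zero D (hS₀P p hp).pos.ne'))
  have hM1 : 1 ≤ M := Nat.one_le_iff_ne_zero.mpr (Nat.mul_ne_zero (by omega) (by omega))
  set g : ℕ → ℂ := fun n => if ∃ p ∈ S₀, p ^ D ∣ n then 0 else f (A n) * χ (n / A n) with hg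
  have hPdvdM : ∀ p ∈ S₀, p ^ D ∣ M :=
    fun p hp => Dvd.dvd.mul_left (Finset.dvd_prod_of_mem _ hp) m
  have hχabs : ∀ x : ℕ, ‖χ x‖ ≤ 1 := by
    intro x
    rw [hχ₀]
    simpa using χ₀.norm_le_one (x : ZMod m)
  have hχper : ∀ a k : ℕ, χ (a + m * k) = χ a := by
    intro a k
    rw [hχ₀, hχ₀]
    congr 1
    push_cast
    simp [ZMod.natCast_self]
  have hAdvd : ∀ n : ℕ, A n ∣ n := by
    intro n
    exact prod_pow_primes_dvd S₀ hS₀P _ n (fun p _ => Nat.ordProj_dvd n p)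
  have hAdvdP : ∀ n : ℕ, (¬ ∃ p ∈ S₀, p ^ D ∣ n) → A n ∣ P := by
    intro n hn
    refine Finset.prod_dvd_prod_of_dvd _ _ (fun p hp => ?_)
    apply pow_dvd_pow
    have hnd : ¬ p ^ D ∣ n := fun h => hn ⟨p, hp, h⟩
    have hn0 : n ≠ 0 := fun h => hnd (h ▸ dvd_zero _)
    by_contra hlt
    push_neg at hlt
    exact hnd (((hS₀P p hp).pow_dvd_iff_le_factorization hn0).mpr (by omega))
  -- periodicity
  have hper : ∀ n : ℕ, g (n + M) = g n := by
    intro n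
    by_cases hbad : ∃ p ∈ S₀, p ^ D ∣ n
    · obtain ⟨p, hp, hd⟩ := hbad
      rw [hg]
      simp only
      rw [if_pos ⟨p, hp, hd.add (hPdvdM p hp)⟩, if_pos ⟨p, hp, hd⟩]
    · have hbad' : ¬ ∃ p ∈ S₀, p ^ D ∣ n + M := by
        rintro ⟨p, hp, hd⟩
        exact hbad ⟨p, hp, by
          have := Nat.dvd_sub hd (hPdvdM p hp)
          simpa using this⟩
      have hAeq : A (n + M) = A n := by
        refine Finset.prod_congr rfl (fun p hp => ?_)
        have hnd : ¬ p ^ D ∣ n := fun h => hbad ⟨p, hp, h⟩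
        have hn0 : n ≠ 0 := fun h => hnd (h ▸ dvd_zero _)
        have hnM0 : n + M ≠ 0 := by omega
        have hpp := hS₀P p hp
        set v : ℕ := n.factorization p with hv
        have hvD : v < D := by
          by_contra hge
          push_neg at hge
          exact hnd ((hpp.pow_dvd_iff_le_factorization hn0).mpr hge)
        have hle : v ≤ (n + M).factorization p := by
          rw [← hpp.pow_dvd_iff_le_factorization hnM0]
          exact (Nat.ordProj_dvd n p).add ((pow_dvd_pow p hvD.le).trans (hPdvdM p hp))
        have hlt : (n + M).factorization p < v + 1 := by
          rw [Nat.lt_succ_iff]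
          by_contra hge
          push_neg at hge
          have hd1 : p ^ (v + 1) ∣ n + M := by
            rw [hpp.pow_dvd_iff_le_factorization hnM0]; omega
          have hd2 : p ^ (v + 1) ∣ M := (pow_dvd_pow p (by omega)).trans (hPdvdM p hp)
          have hd3 : p ^ (v + 1) ∣ n := by
            have := Nat.dvd_sub hd1 hd2
            simpa using this
          exact Nat.pow_succ_factorization_not_dvd hn0 (hS₀P p hp) hd3
        congr 1
        omega
      rw [hg]
      simp only
      rw [if_neg hbad', if_neg hbad, hAeq]
      congr 1
      have hAn : A n ∣ n := hAdvd n
      have hAP : A n ∣ P := hAdvdP n hbad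
      have hMA : M / A n = m * (P / A n) := by
        rw [hM, Nat.mul_div_assoc m hAP]
      rw [Nat.add_div_of_dvd_right hAn, hMA]
      exact hχper _ _
  -- bound on g
  have hgle : ∀ n : ℕ, ‖g n‖ ≤ 1 := by
    intro n
    rw [hg]
    simp only
    split_ifs with h
    · simp
    · rw [norm_mul]
      calc ‖f (A n)‖ * ‖χ (n / A n)‖
          ≤ 1 * 1 := mul_le_mul (hb _) (hχabs _) (norm_nonneg _) zero_le_one
        _ = 1 := mul_one 1
  -- f = g off the bad set
  have heq : ∀ n : ℕ, 1 ≤ n → ¬ (∃ p, (p ∈ F ∧ p ∉ S₀) ∧ p ∣ n) →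
      ¬ (∃ p ∈ S₀, p ^ D ∣ n) → f n = g n := by
    intro n hn1 hbad1 hbad2
    have hn0 : n ≠ 0 := by omega
    set a : ℕ := A n with ha
    set b : ℕ := n / a with hbdef
    have hab : a * b = n := Nat.mul_div_cancel' (hAdvd n)
    have hb0 : b ≠ 0 := by
      intro h
      rw [h, mul_zero] at hab
      exact hn0 hab.symm
    have hpb : ∀ p ∈ S₀, ¬ p ∣ b := by
      intro p hp hpdvd
      have h1 : p ^ (n.factorization p) ∣ a := Finset.dvd_prod_of_mem _ hp
      have h2 : p ^ (n.factorization p + 1) ∣ n := by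
        have h3 : p ^ (n.factorization p) * p ∣ a * b := mul_dvd_mul h1 hpdvd
        rw [hab] at h3
        rwa [pow_succ]
      exact Nat.pow_succ_factorization_not_dvd hn0 (hS₀P p hp) h2
    have hcop : Nat.Coprime a b := by
      by_contra hnc
      obtain ⟨q, hq, hqa, hqb⟩ := Nat.Prime.not_coprime_iff_dvd.mp hnc
      have : ∃ p ∈ S₀, q ∣ p ^ (n.factorization p) :=
        (Prime.dvd_finset_prod_iff hq.prime _).mp hqa
      obtain ⟨p, hp, hqp⟩ := this
      have hqp' : q ∣ p := hq.prime.dvd_of_dvd_pow hqp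
      have : q = p := (Nat.prime_dvd_prime_iff_eq hq (hS₀P p hp)).mp hqp'
      exact hpb p hp (this ▸ hqb)
    have hfb : f b = χ b := by
      apply hfχ b (Nat.one_le_iff_ne_zero.mpr hb0)
      intro p hpF hpdvd
      by_cases hpS : p ∈ S₀
      · exact hpb p hpS hpdvd
      · exact hbad1 ⟨p, ⟨hpF, hpS⟩, hpdvd.trans (Dvd.intro_left a hab)⟩
    have : f n = f a * f b := by
      rw [← hab]
      exact hf.2 a b hcop
    rw [this, hfb, hg]
    simp only
    rw [if_neg hbad2]
  -- final estimate
  refine ⟨g, M, hM1, hper, hgle, ?_⟩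
  intro N hN
  have hN0 : (0:ℝ) < (N:ℝ) := by positivity
  set bad : ℕ → Prop := fun n => (∃ p, (p ∈ F ∧ p ∉ S₀) ∧ p ∣ n) ∨ (∃ p ∈ S₀, p ^ D ∣ n)
    with hbad
  set T : Finset ℕ := (Finset.Icc 1 N).filter (fun p => p ∈ F ∧ p ∉ S₀) with hT
  -- sum over T of 1/p is small
  have hTsum : ∑ p ∈ T, (1:ℝ)/(p:ℝ) ≤ ε4 := by
    set t : Finset ↥F := T.subtype (· ∈ F) with ht
    have hdisj : Disjoint t S := by
      rw [Finset.disjoint_left]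
      intro q hq hqS
      have hqT : (q:ℕ) ∈ T := by
        have := Finset.mem_subtype.mp hq
        exact this
      have : (q:ℕ) ∉ S₀ := ((Finset.mem_filter.mp hqT).2).2
      exact this (Finset.mem_image.mpr ⟨q, hqS, rfl⟩)
    have h1 := hS t hdisj
    have h2 : ∑ p ∈ t, (1:ℝ)/((p:ℕ):ℝ) = ∑ p ∈ T, (1:ℝ)/(p:ℝ) := by
      rw [ht]
      have h := Finset.sum_subtype_eq_sum_filter (fun n : ℕ => (1:ℝ)/(n:ℝ)) (s := T)
        (p := (· ∈ F))
      rw [Finset.filter_true_of_mem (fun p hp => (Finset.mem_filter.mp hp).2.1)] at h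
      exact h
    have h3 : ‖∑ p ∈ t, (1:ℝ)/((p:ℕ):ℝ)‖ = ∑ p ∈ t, (1:ℝ)/((p:ℕ):ℝ) := by
      rw [Real.norm_eq_abs, abs_of_nonneg]
      exact Finset.sum_nonneg fun p _ => by positivity
    rw [← h2]
    rw [h3] at h1
    exact h1.le
  -- counting
  have hcount : (((Finset.Icc 1 N).filter bad).card : ℝ) ≤ (N:ℝ) * ε4 + (N:ℝ) * ε4 := by
    have hsubset : (Finset.Icc 1 N).filter bad ⊆
        ((Finset.Icc 1 N).filter (fun n => ∃ p, (p ∈ F ∧ p ∉ S₀) ∧ p ∣ n)) ∪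
        ((Finset.Icc 1 N).filter (fun n => ∃ p ∈ S₀, p ^ D ∣ n)) := by
      intro n hn
      obtain ⟨hn1, hn2⟩ := Finset.mem_filter.mp hn
      rcases hn2 with h | h
      · exact Finset.mem_union_left _ (Finset.mem_filter.mpr ⟨hn1, h⟩)
      · exact Finset.mem_union_right _ (Finset.mem_filter.mpr ⟨hn1, h⟩)
    have hc1 : (((Finset.Icc 1 N).filter (fun n => ∃ p, (p ∈ F ∧ p ∉ S₀) ∧ p ∣ n)).card : ℝ)
        ≤ (N:ℝ) * ε4 := by
      have hsub : (Finset.Icc 1 N).filter (fun n => ∃ p, (p ∈ F ∧ p ∉ S₀) ∧ p ∣ n) ⊆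
          T.biUnion (fun p => (Finset.Icc 1 N).filter (fun n => p ∣ n)) := by
        intro n hn
        obtain ⟨hn1, p, ⟨hpF, hpS⟩, hpd⟩ := Finset.mem_filter.mp hn
        have hn1' := Finset.mem_Icc.mp hn1
        have hpT : p ∈ T := by
          rw [hT, Finset.mem_filter, Finset.mem_Icc]
          exact ⟨⟨(hF p hpF).one_lt.le.trans' (by omega),
            (Nat.le_of_dvd (by omega) hpd).trans hn1'.2⟩, hpF, hpS⟩
        exact Finset.mem_biUnion.mpr ⟨p, hpT, Finset.mem_filter.mpr ⟨hn1, hpd⟩⟩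
      calc (((Finset.Icc 1 N).filter (fun n => ∃ p, (p ∈ F ∧ p ∉ S₀) ∧ p ∣ n)).card : ℝ)
          ≤ ((T.biUnion (fun p => (Finset.Icc 1 N).filter (fun n => p ∣ n))).card : ℝ) := by
            exact_mod_cast Finset.card_le_card hsub
        _ ≤ ((∑ p ∈ T, ((Finset.Icc 1 N).filter (fun n => p ∣ n)).card : ℕ) : ℝ) := by
            exact_mod_cast Finset.card_biUnion_le
        _ = ∑ p ∈ T, ((N / p : ℕ) : ℝ) := by
            push_cast
            refine Finset.sum_congr rfl fun p _ => ?_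
            have : Finset.Icc 1 N = Finset.Ioc 0 N := rfl
            rw [this, Nat.Ioc_filter_dvd_card_eq_div]
        _ ≤ ∑ p ∈ T, (N:ℝ) * ((1:ℝ)/(p:ℝ)) := by
            refine Finset.sum_le_sum fun p _ => ?_
            rw [mul_one_div]
            exact Nat.cast_div_le
        _ = (N:ℝ) * ∑ p ∈ T, (1:ℝ)/(p:ℝ) := by rw [Finset.mul_sum]
        _ ≤ (N:ℝ) * ε4 := mul_le_mul_of_nonneg_left hTsum hN0.le
    have hc2 : (((Finset.Icc 1 N).filter (fun n => ∃ p ∈ S₀, p ^ D ∣ n)).card : ℝ)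
        ≤ (N:ℝ) * ε4 := by
      have hsub : (Finset.Icc 1 N).filter (fun n => ∃ p ∈ S₀, p ^ D ∣ n) ⊆
          S₀.biUnion (fun p => (Finset.Icc 1 N).filter (fun n => p ^ D ∣ n)) := by
        intro n hn
        obtain ⟨hn1, p, hpS, hpd⟩ := Finset.mem_filter.mp hn
        exact Finset.mem_biUnion.mpr ⟨p, hpS, Finset.mem_filter.mpr ⟨hn1, hpd⟩⟩
      calc (((Finset.Icc 1 N).filter (fun n => ∃ p ∈ S₀, p ^ D ∣ n)).card : ℝ)
          ≤ ((S₀.biUnion (fun p => (Finset.Icc 1 N).filter (fun n => p ^ D ∣ n))).card : ℝ) := by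
            exact_mod_cast Finset.card_le_card hsub
        _ ≤ ((∑ p ∈ S₀, ((Finset.Icc 1 N).filter (fun n => p ^ D ∣ n)).card : ℕ) : ℝ) := by
            exact_mod_cast Finset.card_biUnion_le
        _ = ∑ p ∈ S₀, ((N / p ^ D : ℕ) : ℝ) := by
            push_cast
            refine Finset.sum_congr rfl fun p _ => ?_
            have : Finset.Icc 1 N = Finset.Ioc 0 N := rfl
            rw [this, Nat.Ioc_filter_dvd_card_eq_div]
        _ ≤ ∑ p ∈ S₀, (N:ℝ) * ((1:ℝ)/((p:ℝ))^D) := by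
            refine Finset.sum_le_sum fun p _ => ?_
            rw [mul_one_div]
            have := Nat.cast_div_le (α := ℝ) (m := N) (n := p ^ D)
            push_cast at this ⊢
            exact this
        _ = (N:ℝ) * ∑ p ∈ S₀, (1:ℝ)/((p:ℝ))^D := by rw [Finset.mul_sum]
        _ ≤ (N:ℝ) * ε4 := mul_le_mul_of_nonneg_left hDsum hN0.le
    calc (((Finset.Icc 1 N).filter bad).card : ℝ)
        ≤ ((((Finset.Icc 1 N).filter (fun n => ∃ p, (p ∈ F ∧ p ∉ S₀) ∧ p ∣ n)) ∪
            ((Finset.Icc 1 N).filter (fun n => ∃ p ∈ S₀, p ^ D ∣ n))).card : ℝ) := by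
          exact_mod_cast Finset.card_le_card hsubset
      _ ≤ (((Finset.Icc 1 N).filter (fun n => ∃ p, (p ∈ F ∧ p ∉ S₀) ∧ p ∣ n)).card : ℝ) +
          (((Finset.Icc 1 N).filter (fun n => ∃ p ∈ S₀, p ^ D ∣ n)).card : ℝ) := by
          exact_mod_cast Finset.card_union_le _ _
      _ ≤ (N:ℝ) * ε4 + (N:ℝ) * ε4 := add_le_add hc1 hc2
  -- sum bound
  have hsum : ∑ n ∈ Finset.Icc 1 N, ‖f n - g n‖
      ≤ 2 * (((Finset.Icc 1 N).filter bad).card : ℝ) := by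
    rw [← Finset.sum_filter_add_sum_filter_not (Finset.Icc 1 N) bad]
    have h2 : ∑ n ∈ (Finset.Icc 1 N).filter (fun n => ¬ bad n), ‖f n - g n‖ = 0 := by
      apply Finset.sum_eq_zero
      intro n hn
      obtain ⟨hn1, hn2⟩ := Finset.mem_filter.mp hn
      have h1 := (Finset.mem_Icc.mp hn1).1
      have : f n = g n := heq n h1 (fun h => hn2 (Or.inl h)) (fun h => hn2 (Or.inr h))
      rw [this, sub_self, norm_zero]
    rw [h2, add_zero]
    calc ∑ n ∈ (Finset.Icc 1 N).filter bad, ‖f n - g n‖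
        ≤ ((Finset.Icc 1 N).filter bad).card • (2:ℝ) := by
          apply Finset.sum_le_card_nsmul
          intro n _
          calc ‖f n - g n‖ ≤ ‖f n‖ + ‖g n‖ := by
                simpa using norm_sub_le (f n) (g n)
            _ ≤ 1 + 1 := add_le_add (hb n) (hgle n)
            _ = 2 := by norm_num
      _ = 2 * (((Finset.Icc 1 N).filter bad).card : ℝ) := by
          rw [nsmul_eq_mul]; ring
  -- conclude
  rw [one_div, inv_mul_le_iff₀ hN0]
  calc ∑ n ∈ Finset.Icc 1 N, ‖f n - g n‖
      ≤ 2 * (((Finset.Icc 1 N).filter bad).card : ℝ) := hsum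
    _ ≤ 2 * ((N:ℝ) * ε4 + (N:ℝ) * ε4) := by linarith
    _ = (N:ℝ) * ε := by rw [hε4]; ring


theorem rap_of_eq_char_off_small_primes
    (f : ℕ → ℂ) (hf : IsMult f) (hb : ∀ n : ℕ, ‖f n‖ ≤ 1)
    (m : ℕ) (hm : 1 ≤ m) (χ : ℕ → ℂ) (hχ : IsDirichletCharFn m χ)
    (F : Set ℕ) (hF : ∀ p ∈ F, Nat.Prime p)
    (hFsum : Summable (fun p : F => (1 : ℝ) / ((p : ℕ) : ℝ)))
    (hfχ : ∀ n : ℕ, 1 ≤ n → (∀ p ∈ F, ¬ p ∣ n) → f n = χ n) :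
    IsRAP f ∧
      ∃ L : ℂ, Filter.Tendsto
        (fun N : ℕ => (1 : ℂ) / N * ∑ n ∈ Finset.Icc 1 N, f n)
        Filter.atTop (nhds L) := by
  have key := approx_key f hf hb m hm χ hχ F hF hFsum hfχ
  constructor
  · intro ε hε
    obtain ⟨g, M, hM1, hper, hgle, hbound⟩ := key (ε/2) (by positivity)
    refine ⟨g, M, hM1, hper, ?_⟩
    have hle : ∀ N : ℕ,
        (1:ℝ)/N * ∑ n ∈ Finset.Icc 1 N, ‖f n - g n‖ ≤ ε/2 := by
      intro N
      rcases Nat.eq_zero_or_pos N with rfl | hN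
      · simp only [Nat.cast_zero, div_zero, zero_mul]
        positivity
      · exact hbound N hN
    have hcob : Filter.IsCoboundedUnder (· ≤ ·) Filter.atTop
        (fun N : ℕ => (1:ℝ)/N * ∑ n ∈ Finset.Icc 1 N, ‖f n - g n‖) :=
      Filter.isCoboundedUnder_le_of_eventually_le Filter.atTop (x := 0)
        (Filter.Eventually.of_forall fun N => by positivity)
    have hlim := Filter.limsup_le_of_le hcob (Filter.Eventually.of_forall hle)
    exact lt_of_le_of_lt hlim (by linarith)
  · set a : ℕ → ℂ := (fun N => (1:ℂ)/N * ∑ n ∈ Finset.Icc 1 N, f n) with ha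
    have hcauchy : CauchySeq a := by
      rw [Metric.cauchySeq_iff]
      intro ε hε
      obtain ⟨g, M, hM1, hper, hgle, hbound⟩ := key (ε/4) (by positivity)
      set b : ℕ → ℂ := (fun N => (1:ℂ)/N * ∑ n ∈ Finset.Icc 1 N, g n) with hbdef
      have hbtend := periodic_mean g M hM1 hper hgle
      have hbc : CauchySeq b := hbtend.cauchySeq
      obtain ⟨N₁, hN₁⟩ := Metric.cauchySeq_iff.mp hbc (ε/4) (by positivity)
      refine ⟨max N₁ 1, fun p hp q hq => ?_⟩
      have habk : ∀ k : ℕ, 1 ≤ k → dist (a k) (b k) ≤ ε/4 := by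
        intro k hk
        rw [dist_eq_norm]
        have hk0 : (0:ℝ) < (k:ℝ) := by
          have : (1:ℝ) ≤ (k:ℝ) := by exact_mod_cast hk
          linarith
        have hsub : a k - b k = (1:ℂ)/k * ∑ n ∈ Finset.Icc 1 k, (f n - g n) := by
          rw [ha, hbdef]
          simp only
          rw [Finset.sum_sub_distrib]
          ring
        rw [hsub]
        calc ‖(1:ℂ)/k * ∑ n ∈ Finset.Icc 1 k, (f n - g n)‖
            ≤ ‖(1:ℂ)/k‖ * ∑ n ∈ Finset.Icc 1 k, ‖f n - g n‖ := by
              rw [norm_mul]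
              exact mul_le_mul_of_nonneg_left (norm_sum_le _ _) (norm_nonneg _)
          _ = (1:ℝ)/k * ∑ n ∈ Finset.Icc 1 k, ‖f n - g n‖ := by
              simp
          _ ≤ ε/4 := hbound k hk
      have hp1 : 1 ≤ p := le_trans (le_max_right N₁ 1) hp
      have hq1 : 1 ≤ q := le_trans (le_max_right N₁ 1) hq
      have hpN : N₁ ≤ p := le_trans (le_max_left N₁ 1) hp
      have hqN : N₁ ≤ q := le_trans (le_max_left N₁ 1) hq
      calc dist (a p) (a q)
          ≤ dist (a p) (b p) + dist (b p) (b q) + dist (b q) (a q) := dist_triangle4 _ _ _ _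
        _ < ε/4 + ε/4 + ε/4 := by
            have h1 := habk p hp1
            have h2 := hN₁ p hpN q hqN
            have h3 := habk q hq1
            rw [dist_comm (b q) (a q)] at *
            linarith
        _ < ε := by linarith
    obtain ⟨L, hL⟩ := cauchySeq_tendsto_of_complete hcauchy
    exact ⟨L, hL⟩
end
end
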